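/- Let N, C be positive integers, T1 > 0, T2 > 0, and let d_{ij} (1 ≤ i ≤ N, 1 ≤ j ≤ C) be real numbers. Then the max–min value sup over probability vectors w ∈ ℝ^N of ( inf over N×C matrices U with probability-vector rows of F(w,U) ), where F(w,U) = Σ_{i=1}^N w_i ( Σ_{j=1}^C u_{ij} d_{ij} + T1 Σ_{j=1}^C u_{ij} log u_{ij} ) − T2 Σ_{i=1}^N w_i log w_i, equals T2 · log( Σ_{i=1}^N ( Σ_{j=1}^C exp(−d_{ij}/T1) )^{−T1/T2} ). -/
import Mathlib


open Real Finset

lemma sumexp_pos {n : ℕ} (hn : 0 < n) (b : Fin n → ℝ) : 0 < ∑ j, Real.exp (b j) :=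
  Finset.sum_pos (fun j _ => Real.exp_pos _) ⟨⟨0, hn⟩, Finset.mem_univ _⟩

lemma gibbs_lb {n : ℕ} (hn : 0 < n) {T : ℝ} (hT : 0 < T) (c u : Fin n → ℝ)
    (hu : ∀ j, 0 ≤ u j) (hsum : ∑ j, u j = 1) :
    -T * Real.log (∑ j, Real.exp (-(c j)/T)) ≤
      ∑ j, u j * c j + T * ∑ j, u j * Real.log (u j) := by
  have hZ : 0 < ∑ k, Real.exp (-(c k)/T) := sumexp_pos hn _
  set Z := ∑ k, Real.exp (-(c k)/T) with hZdef
  have hlogp : ∀ j, Real.log (Real.exp (-(c j)/T) / Z) = -(c j)/T - Real.log Z := by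
    intro j; rw [Real.log_div (Real.exp_ne_zero _) (ne_of_gt hZ), Real.log_exp]
  have key : ∀ j, u j - Real.exp (-(c j)/T)/Z ≤
      u j * (Real.log (u j) - Real.log (Real.exp (-(c j)/T)/Z)) := by
    intro j
    have hp : 0 < Real.exp (-(c j)/T)/Z := div_pos (Real.exp_pos _) hZ
    rcases eq_or_lt_of_le (hu j) with h | h
    · rw [← h]; simp; positivity
    · have hlog := Real.log_le_sub_one_of_pos (div_pos hp h)
      rw [Real.log_div (ne_of_gt hp) (ne_of_gt h), div_sub_one (ne_of_gt h)] at hlog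
      have := mul_le_mul_of_nonneg_left hlog (le_of_lt h)
      rw [mul_div_cancel₀ _ (ne_of_gt h)] at this
      nlinarith
  have hsum2 : ∑ j, Real.exp (-(c j)/T)/Z = 1 := by
    rw [← Finset.sum_div]; exact div_self (ne_of_gt hZ)
  have h0 : 0 ≤ ∑ j, u j * (Real.log (u j) - Real.log (Real.exp (-(c j)/T)/Z)) := by
    have h := Finset.sum_le_sum (fun j (_ : j ∈ univ) => key j)
    rw [Finset.sum_sub_distrib, hsum, hsum2] at h
    linarith
  have hexp : T * ∑ j, u j * (Real.log (u j) - Real.log (Real.exp (-(c j)/T)/Z))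
      = T * ∑ j, u j * Real.log (u j) + ∑ j, u j * c j + T * Real.log Z := by
    have h1 : ∀ j ∈ univ, T * (u j * (Real.log (u j) - Real.log (Real.exp (-(c j)/T)/Z)))
        = T * (u j * Real.log (u j)) + u j * c j + (T * Real.log Z) * u j := by
      intro j _
      rw [hlogp j]
      field_simp
      ring
    rw [Finset.mul_sum, Finset.sum_congr rfl h1, Finset.sum_add_distrib,
      Finset.sum_add_distrib, ← Finset.mul_sum, ← Finset.mul_sum, hsum, mul_one]
  have h0T : 0 ≤ T * ∑ j, u j * (Real.log (u j) - Real.log (Real.exp (-(c j)/T)/Z)) :=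
    mul_nonneg hT.le h0
  rw [hexp] at h0T
  linarith

lemma gibbs_eq {n : ℕ} (hn : 0 < n) {T : ℝ} (hT : 0 < T) (c : Fin n → ℝ) :
    ∑ j, (Real.exp (-(c j)/T) / ∑ k, Real.exp (-(c k)/T)) * c j
      + T * ∑ j, (Real.exp (-(c j)/T) / ∑ k, Real.exp (-(c k)/T)) *
          Real.log (Real.exp (-(c j)/T) / ∑ k, Real.exp (-(c k)/T))
    = -T * Real.log (∑ j, Real.exp (-(c j)/T)) := by
  have hZ : 0 < ∑ k, Real.exp (-(c k)/T) := sumexp_pos hn _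
  set Z := ∑ k, Real.exp (-(c k)/T) with hZdef
  have hlogp : ∀ j, Real.log (Real.exp (-(c j)/T) / Z) = -(c j)/T - Real.log Z := by
    intro j; rw [Real.log_div (Real.exp_ne_zero _) (ne_of_gt hZ), Real.log_exp]
  have hsum2 : ∑ j, Real.exp (-(c j)/T)/Z = 1 := by
    rw [← Finset.sum_div]; exact div_self (ne_of_gt hZ)
  have h1 : ∀ j ∈ univ, (Real.exp (-(c j)/T)/Z) * c j
      + T * ((Real.exp (-(c j)/T)/Z) * Real.log (Real.exp (-(c j)/T)/Z))
      = (-T * Real.log Z) * (Real.exp (-(c j)/T)/Z) := by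
    intro j _
    rw [hlogp j]
    field_simp
    ring
  rw [Finset.mul_sum, ← Finset.sum_add_distrib, Finset.sum_congr rfl h1,
    ← Finset.mul_sum, hsum2, mul_one]

/-- The max–min value of the empirical ITISC objective: the supremum over probability
vectors `w` of the infimum over matrices `U` with probability-vector rows of
`F(w,U) = ∑ i, w i * (∑ j, U i j * d i j + T1 * ∑ j, U i j * log (U i j))
          - T2 * ∑ i, w i * log (w i)`
equals `T2 * log (∑ i, (∑ j, exp (-(d i j)/T1)) ^ (-T1/T2))`. -/
theorem itisc_maxmin_value (N C : ℕ) (hN : 0 < N) (hC : 0 < C)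
    (T1 T2 : ℝ) (hT1 : 0 < T1) (hT2 : 0 < T2)
    (d : Fin N → Fin C → ℝ) :
    sSup {v : ℝ | ∃ w : Fin N → ℝ, (∀ i, 0 ≤ w i) ∧ (∑ i, w i = 1) ∧
      v = sInf {r : ℝ | ∃ U : Fin N → Fin C → ℝ,
        (∀ i, (∀ j, 0 ≤ U i j) ∧ ∑ j, U i j = 1) ∧
        r = ∑ i, w i * (∑ j, U i j * d i j + T1 * ∑ j, U i j * Real.log (U i j))
              - T2 * ∑ i, w i * Real.log (w i)}}
    = T2 * Real.log (∑ i, (∑ j, Real.exp (-(d i j) / T1)) ^ (-T1 / T2)) := by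
  -- notation
  have hZ : ∀ i : Fin N, 0 < ∑ j, Real.exp (-(d i j) / T1) := fun i => sumexp_pos hC _
  set a : Fin N → ℝ := fun i => -T1 * Real.log (∑ j, Real.exp (-(d i j) / T1)) with ha
  -- Step 1: inner infimum characterization
  have inner_eq : ∀ w : Fin N → ℝ, (∀ i, 0 ≤ w i) → (∑ i, w i = 1) →
      sInf {r : ℝ | ∃ U : Fin N → Fin C → ℝ,
        (∀ i, (∀ j, 0 ≤ U i j) ∧ ∑ j, U i j = 1) ∧
        r = ∑ i, w i * (∑ j, U i j * d i j + T1 * ∑ j, U i j * Real.log (U i j))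
              - T2 * ∑ i, w i * Real.log (w i)}
      = ∑ i, w i * a i - T2 * ∑ i, w i * Real.log (w i) := by
    intro w hw hwsum
    set S := {r : ℝ | ∃ U : Fin N → Fin C → ℝ,
        (∀ i, (∀ j, 0 ≤ U i j) ∧ ∑ j, U i j = 1) ∧
        r = ∑ i, w i * (∑ j, U i j * d i j + T1 * ∑ j, U i j * Real.log (U i j))
              - T2 * ∑ i, w i * Real.log (w i)} with hS
    set rw0 := ∑ i, w i * a i - T2 * ∑ i, w i * Real.log (w i) with hrw0
    have hlb : ∀ r ∈ S, rw0 ≤ r := by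
      rintro r ⟨U, hU, rfl⟩
      have h1 : ∀ i ∈ univ, w i * a i ≤
          w i * (∑ j, U i j * d i j + T1 * ∑ j, U i j * Real.log (U i j)) := by
        intro i _
        exact mul_le_mul_of_nonneg_left
          (gibbs_lb hC hT1 (d i) (U i) (hU i).1 (hU i).2) (hw i)
      have := Finset.sum_le_sum h1
      simp only [hrw0]
      linarith
    have hmem : rw0 ∈ S := by
      refine ⟨fun i j => Real.exp (-(d i j)/T1) / ∑ k, Real.exp (-(d i k)/T1),
        fun i => ⟨fun j => le_of_lt (div_pos (Real.exp_pos _) (hZ i)), ?_⟩, ?_⟩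
      · rw [← Finset.sum_div]; exact div_self (ne_of_gt (hZ i))
      · have h2 : ∀ i ∈ univ,
            w i * (∑ j, (Real.exp (-(d i j)/T1) / ∑ k, Real.exp (-(d i k)/T1)) * d i j
              + T1 * ∑ j, (Real.exp (-(d i j)/T1) / ∑ k, Real.exp (-(d i k)/T1)) *
                  Real.log (Real.exp (-(d i j)/T1) / ∑ k, Real.exp (-(d i k)/T1)))
            = w i * a i := by
          intro i _
          rw [gibbs_eq hC hT1 (d i), ha]
        rw [hrw0, Finset.sum_congr rfl h2]
    exact le_antisymm (csInf_le ⟨rw0, hlb⟩ hmem) (le_csInf ⟨rw0, hmem⟩ hlb)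
  -- Step 2: outer supremum
  have hEeq : ∀ i ∈ (univ : Finset (Fin N)),
      Real.exp (-((fun i => -(a i)) i)/T2) = (∑ j, Real.exp (-(d i j) / T1)) ^ (-T1/T2) := by
    intro i _
    rw [Real.rpow_def_of_pos (hZ i), ha]
    congr 1
    ring
  set M := T2 * Real.log (∑ i, (∑ j, Real.exp (-(d i j) / T1)) ^ (-T1 / T2)) with hM
  set V := {v : ℝ | ∃ w : Fin N → ℝ, (∀ i, 0 ≤ w i) ∧ (∑ i, w i = 1) ∧
      v = sInf {r : ℝ | ∃ U : Fin N → Fin C → ℝ,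
        (∀ i, (∀ j, 0 ≤ U i j) ∧ ∑ j, U i j = 1) ∧
        r = ∑ i, w i * (∑ j, U i j * d i j + T1 * ∑ j, U i j * Real.log (U i j))
              - T2 * ∑ i, w i * Real.log (w i)}} with hV
  have hub : ∀ v ∈ V, v ≤ M := by
    rintro v ⟨w, hw, hwsum, rfl⟩
    rw [inner_eq w hw hwsum]
    have h := gibbs_lb hN hT2 (fun i => -(a i)) w hw hwsum
    have hneg : ∑ i, w i * (-(a i)) = -∑ i, w i * a i := by
      simp [mul_neg]
    rw [hneg, Finset.sum_congr rfl hEeq] at h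
    rw [hM]
    linarith
  have hmemM : M ∈ V := by
    refine ⟨fun i => Real.exp (-(-(a i))/T2) / ∑ k, Real.exp (-(-(a k))/T2),
      fun i => le_of_lt (div_pos (Real.exp_pos _) (sumexp_pos hN _)), ?_, ?_⟩
    · rw [← Finset.sum_div]; exact div_self (ne_of_gt (sumexp_pos hN _))
    · set w : Fin N → ℝ := fun i => Real.exp (-(-(a i))/T2) / ∑ k, Real.exp (-(-(a k))/T2)
        with hwdef
      have hw : ∀ i, 0 ≤ w i := fun i => le_of_lt (div_pos (Real.exp_pos _) (sumexp_pos hN _))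
      have hwsum : ∑ i, w i = 1 := by
        rw [hwdef]; rw [← Finset.sum_div]; exact div_self (ne_of_gt (sumexp_pos hN _))
      rw [inner_eq w hw hwsum]
      have h := gibbs_eq hN hT2 (fun i => -(a i))
      simp only at h
      have hneg : ∑ i, w i * (-(a i)) = -∑ i, w i * a i := by
        simp [mul_neg]
      have h' : ∑ j, w j * (-(a j)) + T2 * ∑ j, w j * Real.log (w j)
          = -T2 * Real.log (∑ k, Real.exp (-(-(a k))/T2)) := h
      have hMeq : M = T2 * Real.log (∑ k, Real.exp (-(-(a k))/T2)) := by
        rw [hM, Finset.sum_congr rfl hEeq]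
      rw [hneg] at h'
      rw [hMeq]
      linarith
  exact le_antisymm (csSup_le ⟨M, hmemM⟩ hub) (le_csSup ⟨M, hub⟩ hmemM)
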